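/- Let β > 0, t ≠ 0, and w_1, w_2 > 0. Then (β/√(2π)) ∫_{−∞}^{∞} max( e^{−β²s²/2}/w_1 , e^{−β²(s−t)²/2}/w_2 ) ds = (1/w_1) Φ( β|t|/2 + (1/(β|t|)) log(w_2/w_1) ) + (1/w_2) Φ( β|t|/2 + (1/(β|t|)) log(w_1/w_2) ), where Φ is the standard normal CDF. -/

import Mathlib

open MeasureTheory

/-- The standard normal cumulative distribution function. -/
noncomputable def stdNormalCDF (u : ℝ) : ℝ :=
  (Real.sqrt (2 * Real.pi))⁻¹ * ∫ x in Set.Iic u, Real.exp (-x ^ 2 / 2)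

open Set Real

lemma shift_Iic (f : ℝ → ℝ) (c d : ℝ) :
    ∫ x in Iic c, f (x + d) = ∫ x in Iic (c + d), f x := by
  have A : MeasurableEmbedding (fun x : ℝ => x + d) :=
    (Homeomorph.addRight d).isClosedEmbedding.measurableEmbedding
  have := A.setIntegral_map (μ := volume) f (Iic (c + d))
  rw [map_add_right_eq_self volume d] at this
  have hpre : (fun x : ℝ => x + d) ⁻¹' Iic (c + d) = Iic c := by
    ext x; simp
  rw [this, hpre]

lemma gauss_even (β : ℝ) : (fun s : ℝ => Real.exp (-β ^ 2 * (-s) ^ 2 / 2)) =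
    fun s : ℝ => Real.exp (-β ^ 2 * s ^ 2 / 2) := by
  funext s; rw [neg_sq]

lemma gauss_scale_Iic {β : ℝ} (hβ : 0 < β) (a : ℝ) :
    ∫ s in Iic a, Real.exp (-β ^ 2 * s ^ 2 / 2) =
      β⁻¹ * ∫ x in Iic (β * a), Real.exp (-x ^ 2 / 2) := by
  have h1 : ∫ s in Iic a, Real.exp (-β ^ 2 * s ^ 2 / 2) =
      ∫ s in Ioi (-a), Real.exp (-β ^ 2 * s ^ 2 / 2) := by
    rw [← integral_comp_neg_Iic a (fun s => Real.exp (-β ^ 2 * s ^ 2 / 2))]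
    simp_rw [neg_sq]
  have h2 : ∫ s in Ioi (-a), Real.exp (-β ^ 2 * s ^ 2 / 2) =
      β⁻¹ • ∫ x in Ioi (β * (-a)), Real.exp (-x ^ 2 / 2) := by
    rw [← MeasureTheory.integral_comp_mul_left_Ioi (fun x => Real.exp (-x ^ 2 / 2)) (-a) hβ]
    congr 1
    funext s
    congr 1
    ring
  have h3 : ∫ x in Ioi (-(β * a)), Real.exp (-x ^ 2 / 2) =
      ∫ x in Iic (β * a), Real.exp (-x ^ 2 / 2) := by
    rw [← integral_comp_neg_Iic (β * a) (fun x => Real.exp (-x ^ 2 / 2))]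
    simp_rw [neg_sq]
  rw [h1, h2, smul_eq_mul, mul_neg, h3]

lemma key_pos (β t w₁ w₂ : ℝ) (hβ : 0 < β) (ht : 0 < t)
    (hw₁ : 0 < w₁) (hw₂ : 0 < w₂) :
    (β / Real.sqrt (2 * Real.pi)) *
        ∫ s, max (Real.exp (-β ^ 2 * s ^ 2 / 2) / w₁)
          (Real.exp (-β ^ 2 * (s - t) ^ 2 / 2) / w₂) =
      (1 / w₁) * stdNormalCDF (β * |t| / 2 + (1 / (β * |t|)) * Real.log (w₂ / w₁)) +
      (1 / w₂) * stdNormalCDF (β * |t| / 2 + (1 / (β * |t|)) * Real.log (w₁ / w₂)) := by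
  set L : ℝ := Real.log w₂ - Real.log w₁ with hL
  set s₀ : ℝ := t / 2 + L / (β ^ 2 * t) with hs₀
  have hb : (0 : ℝ) < β ^ 2 / 2 := by positivity
  have base : Integrable (fun x : ℝ => Real.exp (-(β ^ 2 / 2) * x ^ 2)) :=
    integrable_exp_neg_mul_sq hb
  have base' : (fun x : ℝ => Real.exp (-(β ^ 2 / 2) * x ^ 2)) =
      fun x : ℝ => Real.exp (-β ^ 2 * x ^ 2 / 2) := by
    funext x; congr 1; ring
  have I1 : Integrable (fun s : ℝ => Real.exp (-β ^ 2 * s ^ 2 / 2) / w₁) := by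
    have heq : (fun s : ℝ => Real.exp (-β ^ 2 * s ^ 2 / 2) / w₁) =
        fun s : ℝ => Real.exp (-(β ^ 2 / 2) * s ^ 2) / w₁ := by
      funext s; congr 2; ring
    rw [heq]; exact base.div_const w₁
  have I2 : Integrable (fun s : ℝ => Real.exp (-β ^ 2 * (s - t) ^ 2 / 2) / w₂) := by
    have heq : (fun s : ℝ => Real.exp (-β ^ 2 * (s - t) ^ 2 / 2) / w₂) =
        fun s : ℝ => Real.exp (-(β ^ 2 / 2) * (s - t) ^ 2) / w₂ := by
      funext s; congr 2; ring
    rw [heq]; exact (base.comp_sub_right t).div_const w₂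
  have Imax : Integrable (fun s : ℝ => max (Real.exp (-β ^ 2 * s ^ 2 / 2) / w₁)
      (Real.exp (-β ^ 2 * (s - t) ^ 2 / 2) / w₂)) := by
    exact I1.sup I2
  -- pointwise identification of the max
  have hβt : (0 : ℝ) < β ^ 2 * t := by positivity
  have hle : ∀ s ∈ Iic s₀, max (Real.exp (-β ^ 2 * s ^ 2 / 2) / w₁)
      (Real.exp (-β ^ 2 * (s - t) ^ 2 / 2) / w₂) = Real.exp (-β ^ 2 * s ^ 2 / 2) / w₁ := by
    intro s hs
    rw [mem_Iic] at hs
    apply max_eq_left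
    rw [div_le_div_iff₀ hw₂ hw₁]
    rw [show w₁ = Real.exp (Real.log w₁) from (Real.exp_log hw₁).symm,
      show w₂ = Real.exp (Real.log w₂) from (Real.exp_log hw₂).symm]
    rw [← Real.exp_add, ← Real.exp_add, Real.exp_le_exp]
    have hs' : s * (β ^ 2 * t) ≤ s₀ * (β ^ 2 * t) := by
      exact mul_le_mul_of_nonneg_right hs hβt.le
    have hs₀' : s₀ * (β ^ 2 * t) = β ^ 2 * t ^ 2 / 2 + L := by
      rw [hs₀, add_mul, div_mul_cancel₀ _ hβt.ne']; ring
    rw [hs₀'] at hs'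
    nlinarith [hs']
  have hge : ∀ s ∈ Ioi s₀, max (Real.exp (-β ^ 2 * s ^ 2 / 2) / w₁)
      (Real.exp (-β ^ 2 * (s - t) ^ 2 / 2) / w₂) = Real.exp (-β ^ 2 * (s - t) ^ 2 / 2) / w₂ := by
    intro s hs
    rw [mem_Ioi] at hs
    apply max_eq_right
    rw [div_le_div_iff₀ hw₁ hw₂]
    rw [show w₂ = Real.exp (Real.log w₂) from (Real.exp_log hw₂).symm,
      show w₁ = Real.exp (Real.log w₁) from (Real.exp_log hw₁).symm]
    rw [← Real.exp_add, ← Real.exp_add, Real.exp_le_exp]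
    have hs' : s₀ * (β ^ 2 * t) ≤ s * (β ^ 2 * t) := by
      exact mul_le_mul_of_nonneg_right hs.le hβt.le
    have hs₀' : s₀ * (β ^ 2 * t) = β ^ 2 * t ^ 2 / 2 + L := by
      rw [hs₀, add_mul, div_mul_cancel₀ _ hβt.ne']; ring
    rw [hs₀'] at hs'
    nlinarith [hs']
  -- split the integral
  have hsplit : (∫ s, max (Real.exp (-β ^ 2 * s ^ 2 / 2) / w₁)
        (Real.exp (-β ^ 2 * (s - t) ^ 2 / 2) / w₂)) =
      (∫ s in Iic s₀, Real.exp (-β ^ 2 * s ^ 2 / 2) / w₁) +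
      (∫ s in Ioi s₀, Real.exp (-β ^ 2 * (s - t) ^ 2 / 2) / w₂) := by
    rw [← intervalIntegral.integral_Iic_add_Ioi (Imax.integrableOn) (Imax.integrableOn)]
    congr 1
    · exact setIntegral_congr_fun measurableSet_Iic hle
    · exact setIntegral_congr_fun measurableSet_Ioi hge
  -- evaluate each piece
  have e1 : ∫ s in Iic s₀, Real.exp (-β ^ 2 * s ^ 2 / 2) / w₁ =
      (β⁻¹ / w₁) * ∫ x in Iic (β * s₀), Real.exp (-x ^ 2 / 2) := by
    rw [integral_div, gauss_scale_Iic hβ]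
    ring
  have e2 : ∫ s in Ioi s₀, Real.exp (-β ^ 2 * (s - t) ^ 2 / 2) / w₂ =
      (β⁻¹ / w₂) * ∫ x in Iic (β * (t - s₀)), Real.exp (-x ^ 2 / 2) := by
    rw [integral_div]
    have h1 : ∫ s in Ioi s₀, Real.exp (-β ^ 2 * (s - t) ^ 2 / 2) =
        ∫ x in Iic (-s₀), Real.exp (-β ^ 2 * (x + t) ^ 2 / 2) := by
      rw [← integral_comp_neg_Ioi s₀
        (fun x => Real.exp (-β ^ 2 * (x + t) ^ 2 / 2))]
      congr 1
      funext s
      congr 2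
      ring
    have h2 : ∫ x in Iic (-s₀), Real.exp (-β ^ 2 * (x + t) ^ 2 / 2) =
        ∫ x in Iic (-s₀ + t), Real.exp (-β ^ 2 * x ^ 2 / 2) :=
      shift_Iic (fun x => Real.exp (-β ^ 2 * x ^ 2 / 2)) (-s₀) t
    rw [h1, h2, show -s₀ + t = t - s₀ by ring, gauss_scale_Iic hβ]
    ring
  -- identify the CDF arguments
  have ha1 : β * s₀ = β * |t| / 2 + (1 / (β * |t|)) * Real.log (w₂ / w₁) := by
    rw [abs_of_pos ht, Real.log_div hw₂.ne' hw₁.ne', hs₀, hL]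
    field_simp
  have ha2 : β * (t - s₀) = β * |t| / 2 + (1 / (β * |t|)) * Real.log (w₁ / w₂) := by
    rw [abs_of_pos ht, Real.log_div hw₁.ne' hw₂.ne', hs₀, hL]
    field_simp
    ring
  rw [hsplit, e1, e2, ha1, ha2]
  unfold stdNormalCDF
  field_simp

theorem normal_model_exponent (β t w₁ w₂ : ℝ) (hβ : 0 < β) (ht : t ≠ 0)
    (hw₁ : 0 < w₁) (hw₂ : 0 < w₂) :
    (β / Real.sqrt (2 * Real.pi)) *
        ∫ s, max (Real.exp (-β ^ 2 * s ^ 2 / 2) / w₁)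
          (Real.exp (-β ^ 2 * (s - t) ^ 2 / 2) / w₂) =
      (1 / w₁) * stdNormalCDF (β * |t| / 2 + (1 / (β * |t|)) * Real.log (w₂ / w₁)) +
      (1 / w₂) * stdNormalCDF (β * |t| / 2 + (1 / (β * |t|)) * Real.log (w₁ / w₂)) := by
  rcases ht.lt_or_gt with htneg | htpos
  · have hmt : 0 < -t := by linarith
    have := key_pos β (-t) w₁ w₂ hβ hmt hw₁ hw₂
    rw [abs_neg] at this
    rw [← this]
    congr 1
    rw [← MeasureTheory.integral_neg_eq_self (f := fun s =>
      max (Real.exp (-β ^ 2 * s ^ 2 / 2) / w₁) (Real.exp (-β ^ 2 * (s - t) ^ 2 / 2) / w₂))]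
    congr 1
    funext s
    congr 3
    · rw [neg_sq]
    · congr 2
      ring
  · exact key_pos β t w₁ w₂ hβ htpos hw₁ hw₂
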